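/- Let n ≥ 2 be even, let L be a real symmetric n×n matrix all of whose rows sum to zero such that the submatrix L̃ (obtained by deleting the last row and column) is invertible, and let R be the associated effective-resistance matrix. Let A and B be disjoint subsets of {1,…,n} with A ∪ B = {1,…,n} and |A| = |B| = n/2. Then det[L_{i,j}]_{i∈A, j∈B} = (−1)^{n/2} · det(L̃) · c₁, where the rows are indexed by the elements of A in increasing order and the columns by the elements of B in increasing order, and where c₁ is the coefficient of t in the (degree ≤ 1 in t) polynomial det[t − (1/2)R_{i,j}]_{i∈A, j∈B}. -/

import Mathlib

open Matrix BigOperators Polynomial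

section Aux

variable {ι : Type*} [DecidableEq ι] [Fintype ι] {S : Type*} [CommRing S]

private lemma detRankOneAux (v u : ι → S) (s : Finset ι) :
    ∀ M : Matrix ι ι S,
      (Matrix.det (fun i j => M i j + (if i ∈ s then v i * u j else 0)))
        = M.det + ∑ c ∈ s, v c * (M.updateRow c u).det := by
  classical
  induction s using Finset.induction_on with
  | empty => intro M; simp
  | @insert a s ha IH =>
    intro M
    have key : (fun i j => M i j + (if i ∈ insert a s then v i * u j else 0))
        = Matrix.updateRow (fun i j => M i j + (if i ∈ s then v i * u j else 0)) a
            ((fun j => M a j) + v a • u) := by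
      ext i j
      by_cases h : i = a
      · subst h
        simp [Matrix.updateRow, Function.update_apply, ha, Pi.add_apply, Pi.smul_apply, smul_eq_mul]
      · simp [Matrix.updateRow, Function.update_apply, h]
    rw [key, Matrix.det_updateRow_add (M := (fun i j => M i j + (if i ∈ s then v i * u j else 0) : Matrix ι ι S)), Matrix.det_updateRow_smul (M := (fun i j => M i j + (if i ∈ s then v i * u j else 0) : Matrix ι ι S))]
    have h1 : Matrix.updateRow (fun i j => M i j + (if i ∈ s then v i * u j else 0)) a
        (fun j => M a j)
        = (fun i j => M i j + (if i ∈ s then v i * u j else 0)) := by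
      have h0 : (fun j => M a j) = (fun i j => M i j + (if i ∈ s then v i * u j else 0)) a := by
        funext j; simp [ha]
      rw [h0, Matrix.updateRow_eq_self (A := (fun i j => M i j + (if i ∈ s then v i * u j else 0) : Matrix ι ι S))]
    have h2 : Matrix.updateRow (fun i j => M i j + (if i ∈ s then v i * u j else 0)) a u
        = (fun i j => (M.updateRow a u) i j + (if i ∈ s then v i * u j else 0)) := by
      ext i j
      by_cases h : i = a
      · subst h; simp [Matrix.updateRow, Function.update_apply, ha]; erw [Function.update_self]
      · simp [Matrix.updateRow, Function.update_apply, h]; erw [Function.update_of_ne h]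
    rw [h1, h2, IH M, IH (M.updateRow a u)]
    have h3 : ∀ c ∈ s, v c * ((M.updateRow a u).updateRow c u).det = 0 := by
      intro c hc
      have hca : c ≠ a := fun h => ha (h ▸ hc)
      have hz : ((M.updateRow a u).updateRow c u).det = 0 := by
        apply Matrix.det_zero_of_row_eq hca
        simp [Matrix.updateRow_self, Matrix.updateRow_ne hca.symm]
      rw [hz, mul_zero]
    rw [Finset.sum_congr rfl h3, Finset.sum_const_zero, add_zero,
      Finset.sum_insert ha]
    ring

/-- Rank-one update of a determinant (expansion form). -/
lemma det_add_rankOne (M : Matrix ι ι S) (v u : ι → S) :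
    (Matrix.det (fun i j => M i j + v i * u j))
      = M.det + ∑ c, v c * (M.updateRow c u).det := by
  have := detRankOneAux v u (Finset.univ) M
  simpa using this

/-- Coefficient of `t¹` in `det (t - (N i j + x i))`, with row-junk `x` eliminated. -/
lemma coeff_one_det_X_sub (N : Matrix ι ι ℝ) (x : ι → ℝ) :
    ((Matrix.det (fun i j => (X : ℝ[X]) - C (N i j + x i)))).coeff 1
      = ∑ c, ((-N).updateRow c (fun _ => 1)).det := by
  have h0 : (fun i j => (X : ℝ[X]) - C (N i j + x i))
      = fun i j => ((-N).map C) i j + (X - C (x i)) * (fun _ : ι => (1 : ℝ[X])) j := by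
    funext i j
    simp [Matrix.map_apply, map_add, map_neg]
    ring
  rw [h0, det_add_rankOne]
  have hdet : ((-N).map C).det = C ((-N).det) := by
    have := (Polynomial.C : ℝ →+* ℝ[X]).map_det (-N)
    rw [RingHom.mapMatrix_apply] at this
    exact this.symm
  have hupd : ∀ c : ι, (((-N).map C).updateRow c (fun _ => (1:ℝ[X]))).det
      = C (((-N).updateRow c (fun _ => 1)).det) := by
    intro c
    have he : ((-N).map C).updateRow c (fun _ => (1:ℝ[X]))
        = ((-N).updateRow c (fun _ => (1:ℝ))).map C := by
      ext i j
      by_cases h : i = c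
      · subst h; simp
      · simp [Matrix.updateRow_ne h]
    rw [he]
    have := (Polynomial.C : ℝ →+* ℝ[X]).map_det ((-N).updateRow c (fun _ => (1:ℝ)))
    rw [RingHom.mapMatrix_apply] at this
    exact this.symm
  rw [hdet]
  simp only [hupd]
  rw [Polynomial.coeff_add, Polynomial.coeff_C]
  rw [Polynomial.finset_sum_coeff]
  have hterm : ∀ c : ι, ((X - C (x c)) * C (((-N).updateRow c (fun _ => 1)).det)).coeff 1
      = ((-N).updateRow c (fun _ => 1)).det := by
    intro c
    rw [sub_mul, Polynomial.coeff_sub, ← Polynomial.C_mul, Polynomial.coeff_C]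
    have hx : (X * C (((-N).updateRow c (fun _ => 1)).det)).coeff 1
        = (C (((-N).updateRow c (fun _ => 1)).det)).coeff 0 := by
      rw [mul_comm, Polynomial.coeff_mul_X]
    rw [hx]
    simp
  rw [Finset.sum_congr rfl (fun c _ => hterm c)]
  simp

/-- Coefficient of `t¹` in `det (t - (K i j + x i + z j))` equals the cofactor-sum of `-Kᵀ`. -/
lemma coeff_one_det_X_sub' (K : Matrix ι ι ℝ) (x z : ι → ℝ) :
    ((Matrix.det (fun i j => (X : ℝ[X]) - C (K i j + x i + z j)))).coeff 1
      = ∑ c, ((-Kᵀ).updateRow c (fun _ => 1)).det := by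
  have e1 : (Matrix.det (fun i j => (X : ℝ[X]) - C (K i j + x i + z j)))
      = (Matrix.det (fun i j => (X : ℝ[X]) - C ((Kᵀ)ᵀ i j + z j + x i))) := by
    congr 1
    funext i j
    rw [Matrix.transpose_transpose]
    ring_nf
  have e2 := coeff_one_det_X_sub (N := Matrix.of fun i j => Kᵀ j i + z j) x
  have e3 := coeff_one_det_X_sub (N := Matrix.of fun i j => Kᵀ j i + z j) (fun _ => 0)
  have e4 : (Matrix.det (fun i j => (X : ℝ[X]) - C ((Matrix.of fun i j => Kᵀ j i + z j) i j + (0:ℝ))))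
      = (Matrix.det (fun i j => (X : ℝ[X]) - C (Kᵀ i j + z i))) := by
    rw [← Matrix.det_transpose (fun i j => (X : ℝ[X]) - C (Kᵀ i j + z i))]
    congr 1
    ext i j
    simp [Matrix.transpose_apply]
    erw [Matrix.transpose_apply]
    simp
  have e5 := coeff_one_det_X_sub (N := Kᵀ) z
  have e1' : (Matrix.det (fun i j => (X : ℝ[X]) - C (K i j + x i + z j)))
      = (Matrix.det (fun i j => (X : ℝ[X]) - C ((Matrix.of fun i j => Kᵀ j i + z j) i j + x i))) := by
    rw [e1]; rfl
  rw [e1', e2, ← e3, e4, e5]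

end Aux


section PermAux

variable {α : Type*} [DecidableEq α] [Fintype α]
set_option linter.unusedSectionVars false

lemma prod_perm_fix (l : List (Equiv.Perm α)) (x : α) (h : ∀ σ ∈ l, σ x = x) :
    l.prod x = x := by
  induction l with
  | nil => simp
  | cons σ l IH =>
    rw [List.prod_cons]
    have h1 : l.prod x = x := IH (fun τ hτ => h τ (List.mem_cons_of_mem σ hτ))
    rw [Equiv.Perm.mul_apply, h1, h σ List.mem_cons_self]

lemma prod_perm_single_move :
    ∀ (N : ℕ) (f : Fin N → Equiv.Perm α) (x y : α) (d : Fin N),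
    f d x = y → (∀ e, e ≠ d → f e x = x) → (∀ e, e ≠ d → f e y = y) →
    ((List.finRange N).map f).prod x = y := by
  intro N
  induction N with
  | zero => intro f x y d; exact absurd d.2 (by omega)
  | succ N IH =>
    intro f x y d hd hx hy
    rw [List.finRange_succ, List.map_cons, List.prod_cons, List.map_map]
    rcases Fin.eq_zero_or_eq_succ d with h0 | ⟨d', rfl⟩
    · subst h0
      have htail : ((List.finRange N).map (f ∘ Fin.succ)).prod x = x := by
        apply prod_perm_fix
        intro σ hσ
        simp only [List.mem_map] at hσ
        obtain ⟨e, _, rfl⟩ := hσ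
        exact hx _ (Fin.succ_ne_zero e)
      rw [Equiv.Perm.mul_apply, htail, hd]
    · have h0x : f 0 x = x := hx 0 (Ne.symm (Fin.succ_ne_zero d'))
      have h0y : f 0 y = y := hy 0 (Ne.symm (Fin.succ_ne_zero d'))
      have htail : ((List.finRange N).map (f ∘ Fin.succ)).prod x = y := by
        apply IH (f ∘ Fin.succ) x y d' hd
        · intro e he
          exact hx _ (fun h => he (Fin.succ_injective _ h))
        · intro e he
          exact hy _ (fun h => he (Fin.succ_injective _ h))
      rw [Equiv.Perm.mul_apply, htail, h0y]

lemma sign_prod_swaps (N : ℕ) (xs ys : Fin N → α)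
    (hxy : ∀ d e, xs d ≠ ys e) :
    Equiv.Perm.sign ((List.finRange N).map (fun d => Equiv.swap (xs d) (ys d))).prod
      = (-1) ^ N := by
  rw [Equiv.Perm.sign_prod_list_swap, List.length_map, List.length_finRange]
  intro g hg
  simp only [List.mem_map] at hg
  obtain ⟨d, _, rfl⟩ := hg
  exact ⟨_, _, hxy d d, rfl⟩

end PermAux


set_option maxHeartbeats 1000000 in
theorem main_gen (n : ℕ) (hn : 2 ≤ n) (heven : Even n)
    (L : Matrix (Fin n) (Fin n) ℝ)
    (hrow : ∀ i, ∑ j, L i j = 0)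
    (Ltil : Matrix (Fin (n-1)) (Fin (n-1)) ℝ)
    (hLtil : ∀ i j : Fin (n-1), Ltil i j
      = L (Fin.castLE (Nat.sub_le n 1) i) (Fin.castLE (Nat.sub_le n 1) j))
    (hinv : IsUnit Ltil)
    (Linv : Matrix (Fin n) (Fin n) ℝ)
    (hLinv : ∀ i j : Fin n, Linv i j =
      if h : (i : ℕ) < n - 1 ∧ (j : ℕ) < n - 1
      then Ltil⁻¹ ⟨i, h.1⟩ ⟨j, h.2⟩ else 0)
    (R : Matrix (Fin n) (Fin n) ℝ)
    (hR : ∀ i j, R i j = Linv i i + Linv j j - 2 * Linv i j)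
    (a b : Fin (n/2) → Fin n)
    (ha_inj : Function.Injective a) (hb_inj : Function.Injective b)
    (hab : ∀ i j, a i ≠ b j)
    (hbL : b ⟨n/2 - 1, by omega⟩ = ⟨n - 1, by omega⟩) :
    Matrix.det (Matrix.of fun i j : Fin (n / 2) => L (a i) (b j))
      = (-1 : ℝ) ^ (n / 2) * Ltil.det *
        (Matrix.det (Matrix.of fun i j : Fin (n / 2) =>
          (Polynomial.X : Polynomial ℝ) - Polynomial.C (R (a i) (b j) / 2))).coeff 1 := by
  classical
  obtain ⟨k0, hk0⟩ := heven
  have hk1 : 1 ≤ n / 2 := by omega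
  have hν_lt : n - 1 < n := by omega
  have hL₀_lt : n / 2 - 1 < n / 2 := by omega
  -- basic inequalities
  have ha_lt : ∀ i, (a i : ℕ) < n - 1 := by
    intro i
    have h1 : a i ≠ (⟨n - 1, hν_lt⟩ : Fin n) := by
      intro h
      exact hab i ⟨n/2 - 1, hL₀_lt⟩ (h.trans hbL.symm)
    have h2 : (a i : ℕ) ≠ n - 1 := fun h => h1 (Fin.ext h)
    have := (a i).isLt
    omega
  have hb_lt : ∀ d : Fin (n/2 - 1), (b ⟨d.1, by omega⟩ : ℕ) < n - 1 := by
    intro d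
    have h1 : b ⟨d.1, by omega⟩ ≠ (⟨n - 1, hν_lt⟩ : Fin n) := by
      intro h
      have h2 := hb_inj (h.trans hbL.symm)
      have h3 := congrArg Fin.val h2
      have := d.isLt
      simp at h3
      omega
    have h2 : (b ⟨d.1, by omega⟩ : ℕ) ≠ n - 1 := fun h => h1 (Fin.ext h)
    have := (b (⟨d.1, by omega⟩ : Fin (n/2))).isLt
    omega
  have hι_lt : ∀ d : Fin (n/2 - 1), d.1 < n / 2 := fun d => by have := d.isLt; omega
  let α' : Fin (n/2) → Fin (n-1) := fun i => ⟨(a i : ℕ), ha_lt i⟩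
  let β : Fin (n/2-1) → Fin (n-1) := fun d => ⟨(b ⟨d.1, hι_lt d⟩ : ℕ), hb_lt d⟩
  have hαβ_ne : ∀ i d, α' i ≠ β d := by
    intro i d h
    have h' : (α' i).val = (β d).val := congrArg Fin.val h
    exact hab i ⟨d.1, hι_lt d⟩ (Fin.ext h')
  have hβ_inj : Function.Injective β := by
    intro d e h
    have h' : (β d).val = (β e).val := congrArg Fin.val h
    have h1 : b ⟨d.1, hι_lt d⟩ = b ⟨e.1, hι_lt e⟩ := Fin.ext h'
    have h2 := congrArg Fin.val (hb_inj h1)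
    simp at h2
    exact Fin.ext h2
  have hα_inj : Function.Injective α' := by
    intro i j h
    have h' : (α' i).val = (α' j).val := congrArg Fin.val h
    exact ha_inj (Fin.ext h')
  let ρf : (Fin (n/2) ⊕ Fin (n/2-1)) → Fin (n-1) := Sum.elim α' β
  have hρinj : Function.Injective ρf := by
    rintro (i | d) (i' | d') h <;> simp only [ρf, Sum.elim_inl, Sum.elim_inr] at h
    · rw [hα_inj h]
    · exact absurd h (hαβ_ne i d')
    · exact absurd h.symm (hαβ_ne i' d)
    · rw [hβ_inj h]
  have hρbij : Function.Bijective ρf := by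
    rw [Fintype.bijective_iff_injective_and_card]
    refine ⟨hρinj, ?_⟩
    simp [Fintype.card_sum]
    omega
  let ρ : (Fin (n/2) ⊕ Fin (n/2-1)) ≃ Fin (n-1) := Equiv.ofBijective ρf hρbij
  have hρ_apply : ∀ x, ρ x = ρf x := fun x => rfl
  let emb : Fin (n-1) → Fin n := Fin.castLE (Nat.sub_le n 1)
  have hemb_α : ∀ i, emb (α' i) = a i := fun i => Fin.ext rfl
  have hemb_β : ∀ d, emb (β d) = b ⟨d.1, hι_lt d⟩ := fun d => Fin.ext rfl
  have hLinv' : ∀ p q : Fin (n-1), Linv (emb p) (emb q) = Ltil⁻¹ p q := by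
    intro p q
    rw [hLinv]
    have hc : ((emb p : Fin n) : ℕ) < n - 1 ∧ ((emb q : Fin n) : ℕ) < n - 1 := ⟨p.isLt, q.isLt⟩
    rw [dif_pos hc]
    rfl
  have hLinv0 : ∀ p : Fin n, Linv p ⟨n - 1, hν_lt⟩ = 0 := by
    intro p
    rw [hLinv, dif_neg]
    simp
  have hLtilinv : Ltil * Ltil⁻¹ = 1 :=
    Matrix.mul_nonsing_inv _ ((Matrix.isUnit_iff_isUnit_det Ltil).mp hinv)
  let ν : Fin n := ⟨n - 1, hν_lt⟩
  let L₀ : Fin (n/2) := ⟨n/2 - 1, hL₀_lt⟩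
  let sgn : Fin (n/2) → ℝ := fun c => if (c:ℕ) < n/2 - 1 then 1 else -1
  let LAB : Matrix (Fin (n/2)) (Fin (n/2)) ℝ := Matrix.of fun i c => L (a i) (b c)
  let GAB : Matrix (Fin (n/2)) (Fin (n/2)) ℝ := Matrix.of fun i c => Linv (a i) (b c)
  let E₁ : Matrix (Fin (n/2)) (Fin (n/2)) ℝ := GAB.updateCol L₀ (fun _ => 1)
  let T₁ : Matrix (Fin (n/2)) (Fin (n/2)) ℝ := Matrix.of fun i c => sgn c * L (a i) (b c)
  let T₃ : Matrix (Fin (n/2-1)) (Fin (n/2)) ℝ :=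
    Matrix.of fun d c => sgn c * L (b ⟨d.1, hι_lt d⟩) (b c)
  let U : Matrix (Fin (n/2) ⊕ Fin (n/2-1)) (Fin (n/2) ⊕ Fin (n/2-1)) ℝ :=
    Matrix.of fun x y =>
      Sum.elim
        (fun (c : Fin (n/2)) =>
          if hc : (c:ℕ) < n/2 - 1 then (if ρ x = β ⟨c.1, hc⟩ then (1:ℝ) else 0) else 1)
        (fun d => Ltil⁻¹ (ρ x) (β d)) y
  let T' := Ltil.submatrix ρ ρ
  have hbc : ∀ (c : Fin (n/2)) (hc : (c:ℕ) < n/2 - 1),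
      b ⟨((⟨c.1, hc⟩ : Fin (n/2-1)) : ℕ), hι_lt _⟩ = b c := by
    intro c hc
    exact congrArg b (Fin.ext rfl)
  have hsum_emb : ∀ r : Fin n, ∑ w : Fin (n-1), L r (emb w) = - L r ⟨n-1, hν_lt⟩ := by
    intro r
    have h2 : ∑ w : Fin (n-1), L r (emb w)
        = ∑ q ∈ Finset.univ.erase (⟨n-1, hν_lt⟩ : Fin n), L r q := by
      refine Finset.sum_bij (fun w _ => emb w) ?_ ?_ ?_ ?_
      · intro w _
        refine Finset.mem_erase.mpr ⟨?_, Finset.mem_univ _⟩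
        intro h
        have := congrArg Fin.val h
        simp [emb] at this
        have := w.isLt
        omega
      · intro w _ w' _ h
        have := congrArg Fin.val h
        simp [emb] at this
        exact Fin.ext this
      · intro q hq
        have hq1 : q ≠ (⟨n-1, hν_lt⟩ : Fin n) := (Finset.mem_erase.mp hq).1
        have hq2 : (q:ℕ) ≠ n - 1 := fun h => hq1 (Fin.ext h)
        have hq3 : (q:ℕ) < n - 1 := by have := q.isLt; omega
        exact ⟨⟨q.1, hq3⟩, Finset.mem_univ _, Fin.ext rfl⟩
      · intro w _
        rfl
    rw [h2]
    have h3 := Finset.sum_erase_add Finset.univ (fun q => L r q) (Finset.mem_univ (⟨n-1, hν_lt⟩ : Fin n))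
    have h1 := hrow r
    linarith
  have claim1 : T' * U = Matrix.fromBlocks T₁ 0 T₃ 1 := by
    ext x y
    rw [Matrix.mul_apply]
    have hterm : ∀ z, T' x z * U z y = (fun w => Ltil (ρ x) w *
        Sum.elim
          (fun (c : Fin (n/2)) =>
            if hc : (c:ℕ) < n/2 - 1 then (if w = β ⟨c.1, hc⟩ then (1:ℝ) else 0) else 1)
          (fun d => Ltil⁻¹ w (β d)) y) (ρ z) := by
      intro z; rcases y with c | d <;> rfl
    rw [Fintype.sum_equiv ρ (fun z => T' x z * U z y) (fun w => Ltil (ρ x) w *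
        Sum.elim
          (fun (c : Fin (n/2)) =>
            if hc : (c:ℕ) < n/2 - 1 then (if w = β ⟨c.1, hc⟩ then (1:ℝ) else 0) else 1)
          (fun d => Ltil⁻¹ w (β d)) y) hterm]
    rcases y with c | d
    · by_cases hc : (c:ℕ) < n/2 - 1
      · simp only [Sum.elim_inl, dif_pos hc]
        have hmul : ∀ w, Ltil (ρ x) w * (if w = β ⟨c.1, hc⟩ then (1:ℝ) else 0)
            = if w = β ⟨c.1, hc⟩ then Ltil (ρ x) w else 0 := by
          intro w; split <;> simp
        rw [Finset.sum_congr rfl (fun w _ => hmul w), Finset.sum_ite_eq' Finset.univ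
          (β ⟨c.1, hc⟩) (fun w => Ltil (ρ x) w), if_pos (Finset.mem_univ _), hLtil]
        rcases x with i | d'
        · show L (emb (α' i)) (emb (β ⟨c.1, hc⟩)) = Matrix.fromBlocks T₁ 0 T₃ 1 (Sum.inl i) (Sum.inl c)
          rw [Matrix.fromBlocks_apply₁₁, hemb_α, hemb_β, hbc c hc]
          show L (a i) (b c) = sgn c * L (a i) (b c)
          rw [show sgn c = 1 from if_pos hc, one_mul]
        · show L (emb (β d')) (emb (β ⟨c.1, hc⟩)) = Matrix.fromBlocks T₁ 0 T₃ 1 (Sum.inr d') (Sum.inl c)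
          rw [Matrix.fromBlocks_apply₂₁, hemb_β, hemb_β, hbc c hc]
          show L (b ⟨d'.1, hι_lt d'⟩) (b c) = sgn c * L (b ⟨d'.1, hι_lt d'⟩) (b c)
          rw [show sgn c = 1 from if_pos hc, one_mul]
      · have hcL : (c:ℕ) = n/2 - 1 := by have := c.isLt; omega
        have hbcν : b c = (⟨n-1, hν_lt⟩ : Fin n) := by
          have hce : c = (⟨n/2 - 1, hL₀_lt⟩ : Fin (n/2)) := Fin.ext hcL
          rw [hce]
          exact hbL
        simp only [Sum.elim_inl, dif_neg hc]
        have hmul : ∀ w, Ltil (ρ x) w * (1:ℝ) = L (emb (ρ x)) (emb w) := by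
          intro w; rw [mul_one, hLtil]
        rw [Finset.sum_congr rfl (fun w _ => hmul w), hsum_emb]
        rcases x with i | d'
        · show - L (emb (α' i)) (⟨n-1, hν_lt⟩ : Fin n)
              = Matrix.fromBlocks T₁ 0 T₃ 1 (Sum.inl i) (Sum.inl c)
          rw [Matrix.fromBlocks_apply₁₁, hemb_α]
          show - L (a i) (⟨n-1, hν_lt⟩ : Fin n) = sgn c * L (a i) (b c)
          rw [show sgn c = -1 from if_neg hc, hbcν]
          ring
        · show - L (emb (β d')) (⟨n-1, hν_lt⟩ : Fin n)
              = Matrix.fromBlocks T₁ 0 T₃ 1 (Sum.inr d') (Sum.inl c)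
          rw [Matrix.fromBlocks_apply₂₁, hemb_β]
          show - L (b ⟨d'.1, hι_lt d'⟩) (⟨n-1, hν_lt⟩ : Fin n) = sgn c * L (b ⟨d'.1, hι_lt d'⟩) (b c)
          rw [show sgn c = -1 from if_neg hc, hbcν]
          ring
    · simp only [Sum.elim_inr]
      rw [← Matrix.mul_apply, hLtilinv]
      rcases x with i | e
      · show (1 : Matrix (Fin (n-1)) (Fin (n-1)) ℝ) (ρ (Sum.inl i)) (β d)
            = Matrix.fromBlocks T₁ 0 T₃ 1 (Sum.inl i) (Sum.inr d)
        have hρl : ρ (Sum.inl i) = α' i := rfl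
        rw [Matrix.fromBlocks_apply₁₂, hρl, Matrix.one_apply_ne (hαβ_ne i d)]
        rfl
      · show (1 : Matrix (Fin (n-1)) (Fin (n-1)) ℝ) (ρ (Sum.inr e)) (β d)
            = Matrix.fromBlocks T₁ 0 T₃ 1 (Sum.inr e) (Sum.inr d)
        have hρr : ρ (Sum.inr e) = β e := rfl
        rw [Matrix.fromBlocks_apply₂₂, hρr]
        by_cases hed : e = d
        · subst hed
          rw [Matrix.one_apply_eq, Matrix.one_apply_eq]
        · rw [Matrix.one_apply_ne (fun h => hed (hβ_inj h)), Matrix.one_apply_ne hed]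
  let σ : Equiv.Perm (Fin (n/2) ⊕ Fin (n/2-1)) :=
    ((List.finRange (n/2-1)).map
      (fun d => Equiv.swap
        (Sum.inl (⟨d.1, hι_lt d⟩ : Fin (n/2)) : Fin (n/2) ⊕ Fin (n/2-1)) (Sum.inr d))).prod
  have hσ_fix : σ (Sum.inl L₀) = Sum.inl L₀ := by
    apply prod_perm_fix
    intro τ hτ
    simp only [List.mem_map] at hτ
    obtain ⟨d, _, rfl⟩ := hτ
    apply Equiv.swap_apply_of_ne_of_ne
    · intro h
      have h2 := congrArg Fin.val (Sum.inl.inj h)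
      have := d.isLt
      simp [L₀] at h2
      omega
    · simp
  have hσ_inl : ∀ d : Fin (n/2-1),
      σ (Sum.inl (⟨d.1, hι_lt d⟩ : Fin (n/2))) = Sum.inr d := by
    intro d
    apply prod_perm_single_move (n/2-1) _ _ _ d
    · exact Equiv.swap_apply_left _ _
    · intro e he
      apply Equiv.swap_apply_of_ne_of_ne
      · intro h
        have h2 := congrArg Fin.val (Sum.inl.inj h)
        simp at h2
        exact he (Fin.ext h2.symm)
      · simp
    · intro e he
      apply Equiv.swap_apply_of_ne_of_ne
      · simp
      · intro h
        exact he (Sum.inr.inj h).symm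
  have hσ_inr : ∀ d : Fin (n/2-1),
      σ (Sum.inr d) = Sum.inl (⟨d.1, hι_lt d⟩ : Fin (n/2)) := by
    intro d
    apply prod_perm_single_move (n/2-1) _ _ _ d
    · exact Equiv.swap_apply_right _ _
    · intro e he
      apply Equiv.swap_apply_of_ne_of_ne
      · simp
      · intro h
        exact he (Sum.inr.inj h).symm
    · intro e he
      apply Equiv.swap_apply_of_ne_of_ne
      · intro h
        have h2 := congrArg Fin.val (Sum.inl.inj h)
        simp at h2
        exact he (Fin.ext h2.symm)
      · simp
  have hsign : Equiv.Perm.sign σ = (-1)^(n/2-1) := by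
    apply sign_prod_swaps
    intro d e
    simp
  let Y : Matrix (Fin (n/2-1)) (Fin (n/2)) ℝ :=
    Matrix.of fun e (c : Fin (n/2)) =>
      if hc : (c:ℕ) < n/2 - 1 then Ltil⁻¹ (β e) (β ⟨c.1, hc⟩) else 1
  have claim2 : U.submatrix id σ = Matrix.fromBlocks E₁ 0 Y 1 := by
    ext x y
    rw [Matrix.submatrix_apply, id_eq]
    rcases y with c | d
    · by_cases hc : (c:ℕ) < n/2 - 1
      · have hceq : (Sum.inl c : Fin (n/2) ⊕ Fin (n/2-1))
            = Sum.inl (⟨((⟨c.1, hc⟩ : Fin (n/2-1)) : ℕ), hι_lt _⟩ : Fin (n/2)) :=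
          congrArg Sum.inl (Fin.ext rfl)
        rw [hceq, hσ_inl ⟨c.1, hc⟩]
        have hUval : ∀ x', U x' (Sum.inr (⟨c.1, hc⟩ : Fin (n/2-1)))
            = Ltil⁻¹ (ρ x') (β ⟨c.1, hc⟩) := fun x' => rfl
        rw [hUval]
        have hcL : c ≠ L₀ := by
          intro h
          have h2 := congrArg Fin.val h
          simp [L₀] at h2
          omega
        rcases x with i | e
        · rw [Matrix.fromBlocks_apply₁₁]
          show Ltil⁻¹ (α' i) (β ⟨c.1, hc⟩) = E₁ i c
          show Ltil⁻¹ (α' i) (β ⟨c.1, hc⟩) = (GAB.updateCol L₀ (fun _ => 1)) i c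
          rw [Matrix.updateCol_ne hcL]
          show Ltil⁻¹ (α' i) (β ⟨c.1, hc⟩) = Linv (a i) (b c)
          rw [← hLinv', hemb_α, hemb_β, hbc c hc]
        · rw [Matrix.fromBlocks_apply₂₁]
          show Ltil⁻¹ (β e) (β ⟨c.1, hc⟩) = Y e c
          show Ltil⁻¹ (β e) (β ⟨c.1, hc⟩)
            = if hc' : (c:ℕ) < n/2 - 1 then Ltil⁻¹ (β e) (β ⟨c.1, hc'⟩) else 1
          rw [dif_pos hc]
      · have hcL0 : c = L₀ := by
          have := c.isLt
          refine Fin.ext ?_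
          simp [L₀]
          omega
        rw [hcL0, hσ_fix]
        have hUval : ∀ x', U x' (Sum.inl L₀) = 1 := by
          intro x'
          show (if hc' : ((L₀ : Fin (n/2)) : ℕ) < n/2 - 1
            then (if ρ x' = β ⟨(L₀ : Fin (n/2)).1, hc'⟩ then (1:ℝ) else 0) else 1) = 1
          rw [dif_neg]
          simp [L₀]
        rw [hUval]
        rcases x with i | e
        · rw [Matrix.fromBlocks_apply₁₁]
          show (1:ℝ) = (GAB.updateCol L₀ (fun _ => 1)) i L₀
          rw [Matrix.updateCol_self]
        · rw [Matrix.fromBlocks_apply₂₁]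
          show (1:ℝ) = if hc' : ((L₀ : Fin (n/2)) : ℕ) < n/2 - 1
            then Ltil⁻¹ (β e) (β ⟨(L₀ : Fin (n/2)).1, hc'⟩) else 1
          rw [dif_neg]
          simp [L₀]
    · rw [hσ_inr d]
      have hdc : ((⟨d.1, hι_lt d⟩ : Fin (n/2)) : ℕ) < n/2 - 1 := d.isLt
      have hβeta : β ⟨((⟨d.1, hι_lt d⟩ : Fin (n/2)) : ℕ), hdc⟩ = β d := by
        exact congrArg β (Fin.ext rfl)
      have hUval : ∀ x', U x' (Sum.inl (⟨d.1, hι_lt d⟩ : Fin (n/2)))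
          = if ρ x' = β d then (1:ℝ) else 0 := by
        intro x'
        show (if hc' : ((⟨d.1, hι_lt d⟩ : Fin (n/2)) : ℕ) < n/2 - 1
          then (if ρ x' = β ⟨((⟨d.1, hι_lt d⟩ : Fin (n/2)) : ℕ), hc'⟩ then (1:ℝ) else 0)
          else 1) = if ρ x' = β d then (1:ℝ) else 0
        rw [dif_pos hdc, hβeta]
      rw [hUval]
      rcases x with i | e
      · rw [Matrix.fromBlocks_apply₁₂]
        have hne : ρ (Sum.inl i) ≠ β d := hαβ_ne i d
        rw [if_neg hne]
        rfl
      · rw [Matrix.fromBlocks_apply₂₂]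
        have hρr : ρ (Sum.inr e) = β e := rfl
        rw [hρr]
        by_cases hed : e = d
        · subst hed
          rw [if_pos rfl, Matrix.one_apply_eq]
        · rw [if_neg (fun h => hed (hβ_inj h)), Matrix.one_apply_ne hed]
  have det1 : T'.det * U.det = T₁.det := by
    rw [← Matrix.det_mul, claim1, Matrix.det_fromBlocks_zero₁₂, Matrix.det_one, mul_one]
  have det2 : T'.det = Ltil.det := Matrix.det_submatrix_equiv_self ρ Ltil
  have hprodsgn : ∏ c, sgn c = (-1 : ℝ) := by
    rw [Finset.prod_eq_single L₀]
    · show (if ((L₀ : Fin (n/2)) : ℕ) < n/2 - 1 then (1:ℝ) else -1) = -1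
      rw [if_neg]
      simp [L₀]
    · intro c _ hcL
      show (if (c : ℕ) < n/2 - 1 then (1:ℝ) else -1) = 1
      rw [if_pos]
      have h2 : (c:ℕ) ≠ n/2 - 1 := by
        intro h
        exact hcL (Fin.ext (by simp [L₀, h]))
      have := c.isLt
      omega
    · intro h
      exact absurd (Finset.mem_univ _) h
  have det3 : T₁.det = - LAB.det := by
    have hT : T₁ = LAB * Matrix.diagonal sgn := by
      ext i c
      rw [Matrix.mul_diagonal]
      show sgn c * L (a i) (b c) = L (a i) (b c) * sgn c
      ring
    rw [hT, Matrix.det_mul, Matrix.det_diagonal, hprodsgn]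
    ring
  have det4 : (U.submatrix id σ).det = E₁.det := by
    rw [claim2, Matrix.det_fromBlocks_zero₁₂, Matrix.det_one, mul_one]
  have det5 : (U.submatrix id σ).det = (-1:ℝ)^(n/2-1) * U.det := by
    rw [Matrix.det_permute' σ U, hsign]
    norm_num
  have hUdet : U.det = (-1:ℝ)^(n/2-1) * E₁.det := by
    have h45 : E₁.det = (-1:ℝ)^(n/2-1) * U.det := by rw [← det4, det5]
    have hsq : ((-1:ℝ)^(n/2-1)) * ((-1:ℝ)^(n/2-1)) = 1 := by
      rw [← mul_pow]
      norm_num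
    calc U.det = ((-1:ℝ)^(n/2-1) * (-1:ℝ)^(n/2-1)) * U.det := by rw [hsq, one_mul]
      _ = (-1:ℝ)^(n/2-1) * ((-1:ℝ)^(n/2-1) * U.det) := by ring
      _ = (-1:ℝ)^(n/2-1) * E₁.det := by rw [← h45]
  have final1 : LAB.det = (-1:ℝ)^(n/2) * Ltil.det * E₁.det := by
    rw [det2, hUdet, det3] at det1
    have hpow : ((-1:ℝ))^(n/2) = -(-1:ℝ)^(n/2-1) := by
      have h1 : n/2 - 1 + 1 = n/2 := by omega
      calc ((-1:ℝ))^(n/2) = (-1:ℝ)^(n/2-1+1) := by rw [h1]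
        _ = -(-1:ℝ)^(n/2-1) := by rw [pow_succ]; ring
    rw [hpow]
    linear_combination det1
  have hcoeff : (Matrix.det (Matrix.of fun i j : Fin (n / 2) =>
      (Polynomial.X : Polynomial ℝ) - Polynomial.C (R (a i) (b j) / 2))).coeff 1 = E₁.det := by
    have e0 : (Matrix.of fun i j : Fin (n / 2) =>
        (Polynomial.X : Polynomial ℝ) - Polynomial.C (R (a i) (b j) / 2))
        = fun i j : Fin (n/2) => (Polynomial.X : Polynomial ℝ)
          - Polynomial.C ((-GAB) i j + (fun i => Linv (a i) (a i) / 2) i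
              + (fun j => Linv (b j) (b j) / 2) j) := by
      funext i j
      have : R (a i) (b j) / 2
          = (-GAB) i j + Linv (a i) (a i) / 2 + Linv (b j) (b j) / 2 := by
        rw [hR]
        show _ = -(GAB i j) + _ + _
        show (Linv (a i) (a i) + Linv (b j) (b j) - 2 * Linv (a i) (b j)) / 2
          = -(Linv (a i) (b j)) + Linv (a i) (a i) / 2 + Linv (b j) (b j) / 2
        ring
      rw [Matrix.of_apply, this]
    rw [e0, coeff_one_det_X_sub' (-GAB) _ _]
    have hGG : (-(-GAB)ᵀ) = GABᵀ := by
      rw [Matrix.transpose_neg, neg_neg]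
    rw [hGG]
    have hzero : ∀ j, GABᵀ L₀ j = 0 := by
      intro j
      show GAB j L₀ = 0
      show Linv (a j) (b L₀) = 0
      have hb0 : b L₀ = (⟨n-1, hν_lt⟩ : Fin n) := hbL
      rw [hb0]
      exact hLinv0 _
    rw [Finset.sum_eq_single L₀]
    · have hE : (GABᵀ).updateRow L₀ (fun _ => (1:ℝ)) = E₁ᵀ := Matrix.updateRow_transpose
      rw [hE, Matrix.det_transpose]
    · intro c _ hcL
      apply Matrix.det_eq_zero_of_row_eq_zero L₀
      intro j
      rw [Matrix.updateRow_ne (Ne.symm hcL)]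
      exact hzero j
    · intro h
      exact absurd (Finset.mem_univ _) h
  show LAB.det = _
  rw [hcoeff]
  exact final1

lemma top_mem_orderEmb (n k : ℕ) (hn : 0 < n) (hk : 0 < k)
    (S : Finset (Fin n)) (hS : S.card = k)
    (hν : (⟨n-1, by omega⟩ : Fin n) ∈ S) :
    S.orderEmbOfFin hS ⟨k-1, by omega⟩ = ⟨n-1, by omega⟩ := by
  obtain ⟨t, ht⟩ : ∃ t, S.orderEmbOfFin hS t = (⟨n-1, by omega⟩ : Fin n) := by
    have h1 : ((⟨n-1, by omega⟩ : Fin n) : Fin n) ∈ (S : Set (Fin n)) := hν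
    rw [← Finset.range_orderEmbOfFin S hS] at h1
    exact h1
  have hle : S.orderEmbOfFin hS ⟨k-1, by omega⟩ ≤ S.orderEmbOfFin hS t := by
    rw [ht]
    refine Fin.le_def.mpr ?_
    have := (S.orderEmbOfFin hS ⟨k-1, by omega⟩).isLt
    simp
    omega
  have h1 : (⟨k-1, by omega⟩ : Fin k) ≤ t := (S.orderEmbOfFin hS).le_iff_le.mp hle
  have h2 : t ≤ (⟨k-1, by omega⟩ : Fin k) := by
    refine Fin.le_def.mpr ?_
    have := t.isLt
    simp
    omega
  rw [← ht]
  exact congrArg (S.orderEmbOfFin hS) (le_antisymm h1 h2)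

set_option maxHeartbeats 1000000 in
/-- Let `n ≥ 2` be even, `L`, `Ltil`, `Linv`, `R` as in the
effective-resistance setup, and let `A`, `B` be disjoint subsets of the nodes with
`A ∪ B` everything and `|A| = |B| = n/2`.  Then the minor `det [L i j]_{i∈A, j∈B}`
(rows/columns taken in increasing order) equals `(−1)^(n/2) · det Ltil · c₁`, where
`c₁` is the coefficient of `t` in the degree-≤1 polynomial
`det [t − (1/2) R i j]_{i∈A, j∈B}`. -/
theorem det_L_minor_eq_sign_detLtil_mul_coeff (n : ℕ) (hn : 2 ≤ n) (heven : Even n)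
    (L : Matrix (Fin n) (Fin n) ℝ)
    (hsymm : L.IsSymm)
    (hrow : ∀ i, ∑ j, L i j = 0)
    (Ltil : Matrix (Fin (n-1)) (Fin (n-1)) ℝ)
    (hLtil : ∀ i j : Fin (n-1), Ltil i j
      = L (Fin.castLE (Nat.sub_le n 1) i) (Fin.castLE (Nat.sub_le n 1) j))
    (hinv : IsUnit Ltil)
    (Linv : Matrix (Fin n) (Fin n) ℝ)
    (hLinv : ∀ i j : Fin n, Linv i j =
      if h : (i : ℕ) < n - 1 ∧ (j : ℕ) < n - 1
      then Ltil⁻¹ ⟨i, h.1⟩ ⟨j, h.2⟩ else 0)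
    (R : Matrix (Fin n) (Fin n) ℝ)
    (hR : ∀ i j, R i j = Linv i i + Linv j j - 2 * Linv i j)
    (A B : Finset (Fin n))
    (hdisj : Disjoint A B)
    (hcover : A ∪ B = Finset.univ)
    (hA : A.card = n / 2) (hB : B.card = n / 2) :
    Matrix.det (Matrix.of fun i j : Fin (n / 2) =>
        L (A.orderIsoOfFin hA i) (B.orderIsoOfFin hB j))
      = (-1 : ℝ) ^ (n / 2) * Ltil.det *
        (Matrix.det (Matrix.of fun i j : Fin (n / 2) =>
          (Polynomial.X : Polynomial ℝ)
            - Polynomial.C (R (A.orderIsoOfFin hA i) (B.orderIsoOfFin hB j) / 2))).coeff 1 := by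
  classical
  have hν_lt : n - 1 < n := by omega
  have hk1 : 1 ≤ n / 2 := by
    obtain ⟨k0, hk0⟩ := heven
    omega
  -- symmetry facts
  have hLs : ∀ p q, L p q = L q p := by
    intro p q
    have h0 := congrFun (congrFun hsymm q) p
    rw [Matrix.transpose_apply] at h0
    exact h0
  have hLtils : Ltilᵀ = Ltil := by
    ext i j
    rw [Matrix.transpose_apply, hLtil, hLtil]
    exact hLs _ _
  have hLtilinvs : ∀ p q, Ltil⁻¹ p q = Ltil⁻¹ q p := by
    intro p q
    have h1 : (Ltil⁻¹)ᵀ = Ltil⁻¹ := by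
      rw [Matrix.transpose_nonsing_inv, hLtils]
    have := congrFun (congrFun h1 p) q
    rw [Matrix.transpose_apply] at this
    exact this.symm
  have hLinvs : ∀ p q, Linv p q = Linv q p := by
    intro p q
    rw [hLinv, hLinv]
    by_cases h : (p : ℕ) < n - 1 ∧ (q : ℕ) < n - 1
    · rw [dif_pos h, dif_pos ⟨h.2, h.1⟩]
      exact hLtilinvs _ _
    · rw [dif_neg h, dif_neg (fun h' => h ⟨h'.2, h'.1⟩)]
  have hRs : ∀ p q, R p q = R q p := by
    intro p q
    rw [hR, hR, hLinvs p q]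
    ring
  -- the top node is in A or in B
  have hmem : (⟨n - 1, hν_lt⟩ : Fin n) ∈ A ∪ B := by
    rw [hcover]
    exact Finset.mem_univ _
  rw [Finset.mem_union] at hmem
  have hAmem : ∀ i, A.orderEmbOfFin hA i ∈ A := fun i => Finset.orderEmbOfFin_mem A hA i
  have hBmem : ∀ i, B.orderEmbOfFin hB i ∈ B := fun i => Finset.orderEmbOfFin_mem B hB i
  simp only [Finset.coe_orderIsoOfFin_apply]
  rcases hmem with hνA | hνB
  · -- top node in A : swap roles and transpose
    have haL : A.orderEmbOfFin hA ⟨n/2 - 1, by omega⟩ = (⟨n - 1, by omega⟩ : Fin n) :=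
      top_mem_orderEmb n (n/2) (by omega) (by omega) A hA hνA
    have key := main_gen n hn heven L hrow Ltil hLtil hinv Linv hLinv R hR
      (fun i => B.orderEmbOfFin hB i) (fun i => A.orderEmbOfFin hA i)
      (B.orderEmbOfFin hB).injective (A.orderEmbOfFin hA).injective
      (fun i j h => by
        have h' : B.orderEmbOfFin hB i = A.orderEmbOfFin hA j := h
        exact Finset.disjoint_left.mp hdisj (hAmem j) (h' ▸ hBmem i))
      haL
    have ht1 : (Matrix.of fun i j : Fin (n / 2) =>
        L (A.orderEmbOfFin hA i) (B.orderEmbOfFin hB j))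
        = (Matrix.of fun i j : Fin (n / 2) =>
            L (B.orderEmbOfFin hB i) (A.orderEmbOfFin hA j))ᵀ := by
      ext i j
      rw [Matrix.transpose_apply, Matrix.of_apply, Matrix.of_apply]
      exact hLs _ _
    have ht2 : (Matrix.of fun i j : Fin (n / 2) =>
        (Polynomial.X : Polynomial ℝ)
          - Polynomial.C (R (A.orderEmbOfFin hA i) (B.orderEmbOfFin hB j) / 2))
        = (Matrix.of fun i j : Fin (n / 2) =>
            (Polynomial.X : Polynomial ℝ)
              - Polynomial.C (R (B.orderEmbOfFin hB i) (A.orderEmbOfFin hA j) / 2))ᵀ := by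
      ext i j
      rw [Matrix.transpose_apply, Matrix.of_apply, Matrix.of_apply, hRs _ _]
    rw [ht1, ht2, Matrix.det_transpose, Matrix.det_transpose]
    exact key
  · -- top node in B
    have hbL : B.orderEmbOfFin hB ⟨n/2 - 1, by omega⟩ = (⟨n - 1, by omega⟩ : Fin n) :=
      top_mem_orderEmb n (n/2) (by omega) (by omega) B hB hνB
    exact main_gen n hn heven L hrow Ltil hLtil hinv Linv hLinv R hR
      (fun i => A.orderEmbOfFin hA i) (fun i => B.orderEmbOfFin hB i)
      (A.orderEmbOfFin hA).injective (B.orderEmbOfFin hB).injective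
      (fun i j h => by
        have h' : A.orderEmbOfFin hA i = B.orderEmbOfFin hB j := h
        exact Finset.disjoint_left.mp hdisj (hAmem i) (h' ▸ hBmem j))
      hbL
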